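/- Let M > 0 and 0 < σ̲ ≤ σ̄ be fixed, and let K = [-M, M] × [σ̲², σ̄²]. Let P₀ and (Pₙ)ₙ≥1 be Borel probability measures on K such that Pₙ converges weakly to P₀. For a probability measure P on K define g_P(y) = ∫ LN(y | μ, σ²) dP(μ, σ²) for y > 0, set c_P = ∫₀^∞ y⁻¹ g_P(y) dy, and define the debiased density f_P(y) = c_P⁻¹ y⁻¹ g_P(y). Then the L¹ distance ∫₀^∞ |f_{Pₙ}(y) − f_{P₀}(y)| dy converges to 0 as n → ∞. -/

import Mathlib

open MeasureTheory Real Set Filter Topology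
open scoped NNReal ENNReal BoundedContinuousFunction

/-- The lognormal density `LN(y | μ, s)` with mean parameter `μ` and variance `s`
(so the standard deviation is `√s`), for `y > 0`. -/
noncomputable def LNv (μ s y : ℝ) : ℝ :=
  (y * Real.sqrt s * Real.sqrt (2 * Real.pi))⁻¹ *
    Real.exp (-(Real.log y - μ) ^ 2 / (2 * s))

/-- The lognormal mixture density `g_P(y) = ∫ LN(y | μ, σ²) dP(μ, σ²)`,
where a point `p : ℝ × ℝ` is `(μ, σ²)`. -/
noncomputable def mixG (P : Measure (ℝ × ℝ)) (y : ℝ) : ℝ :=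
  ∫ p, LNv p.1 p.2 y ∂P

/-- The normalizing constant `c_P = ∫₀^∞ y⁻¹ g_P(y) dy`. -/
noncomputable def cP (P : Measure (ℝ × ℝ)) : ℝ :=
  ∫ y in Set.Ioi (0 : ℝ), y⁻¹ * mixG P y

/-- The debiased density `f_P(y) = c_P⁻¹ y⁻¹ g_P(y)`. -/
noncomputable def fP (P : Measure (ℝ × ℝ)) (y : ℝ) : ℝ :=
  (cP P)⁻¹ * (y⁻¹ * mixG P y)

lemma LNv_nonneg (μ s y : ℝ) (hy : 0 ≤ y) : 0 ≤ LNv μ s y := by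
  unfold LNv
  have h1 : 0 ≤ Real.sqrt s := Real.sqrt_nonneg s
  have h2 : 0 ≤ Real.sqrt (2 * Real.pi) := Real.sqrt_nonneg _
  positivity

lemma LNv_le (μ s y σl : ℝ) (hy : 0 < y) (hσl : 0 < σl) (hs : σl ^ 2 ≤ s) :
    LNv μ s y ≤ (y * σl * Real.sqrt (2 * Real.pi))⁻¹ := by
  have hπ : 0 < Real.sqrt (2 * Real.pi) := Real.sqrt_pos.mpr (by positivity)
  have hσs : σl ≤ Real.sqrt s := by
    have := Real.sqrt_le_sqrt hs
    rwa [Real.sqrt_sq hσl.le] at this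
  have hspos : 0 < s := lt_of_lt_of_le (by positivity) hs
  have h1 : Real.exp (-(Real.log y - μ) ^ 2 / (2 * s)) ≤ 1 := by
    rw [Real.exp_le_one_iff]
    apply div_nonpos_of_nonpos_of_nonneg
    · simp [sq_nonneg]
    · positivity
  calc LNv μ s y ≤ (y * Real.sqrt s * Real.sqrt (2 * Real.pi))⁻¹ * 1 := by
        unfold LNv
        apply mul_le_mul_of_nonneg_left h1
        positivity
    _ = (y * Real.sqrt s * Real.sqrt (2 * Real.pi))⁻¹ := mul_one _
    _ ≤ (y * σl * Real.sqrt (2 * Real.pi))⁻¹ := by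
        apply inv_anti₀ (by positivity)
        gcongr

lemma lnv_integral (μ s : ℝ) (hs : 0 < s) :
    IntegrableOn (fun y => y⁻¹ * LNv μ s y) (Set.Ioi (0 : ℝ)) ∧
      ∫ y in Set.Ioi (0 : ℝ), y⁻¹ * LNv μ s y = Real.exp (s / 2 - μ) := by
  set v : ℝ≥0 := ⟨s, hs.le⟩ with hv
  have hvne : v ≠ 0 := by
    intro h
    apply hs.ne'
    exact congrArg NNReal.toReal h
  have hcoe : ((v : ℝ)) = s := rfl
  have hkey : ∀ x : ℝ, |Real.exp x| • ((fun y => y⁻¹ * LNv μ s y) (Real.exp x))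
      = Real.exp (s / 2 - μ) * ProbabilityTheory.gaussianPDFReal (μ - s) v x := by
    intro x
    rw [abs_of_pos (Real.exp_pos x), smul_eq_mul]
    simp only
    rw [mul_inv_cancel_left₀ (Real.exp_pos x).ne']
    unfold LNv ProbabilityTheory.gaussianPDFReal
    rw [Real.log_exp, hcoe]
    have h1 : Real.sqrt (2 * Real.pi * s) = Real.sqrt s * Real.sqrt (2 * Real.pi) := by
      rw [mul_comm (2 * Real.pi) s, Real.sqrt_mul hs.le]
    rw [h1]
    have hE : Real.exp (-(x - μ) ^ 2 / (2 * s)) =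
        Real.exp (s / 2 - μ) * Real.exp (-(x - (μ - s)) ^ 2 / (2 * s)) * Real.exp x := by
      rw [← Real.exp_add, ← Real.exp_add, Real.exp_eq_exp]
      field_simp
      ring
    rw [hE]
    have h2 : Real.sqrt s ≠ 0 := by positivity
    have h3 : Real.sqrt (2 * Real.pi) ≠ 0 := by positivity
    have h4 : Real.exp x ≠ 0 := Real.exp_ne_zero x
    field_simp
  have himg : Set.Ioi (0 : ℝ) = Real.exp '' Set.univ := by
    rw [Set.image_univ, Real.range_exp]
  have hderiv : ∀ x ∈ (Set.univ : Set ℝ), HasDerivWithinAt Real.exp (Real.exp x) Set.univ x :=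
    fun x _ => (Real.hasDerivAt_exp x).hasDerivWithinAt
  have hinj : Set.InjOn Real.exp Set.univ := Real.exp_injective.injOn
  constructor
  · rw [himg, integrableOn_image_iff_integrableOn_abs_deriv_smul MeasurableSet.univ hderiv hinj]
    have : (fun x => |Real.exp x| • ((fun y => y⁻¹ * LNv μ s y) (Real.exp x)))
        = fun x => Real.exp (s / 2 - μ) * ProbabilityTheory.gaussianPDFReal (μ - s) v x :=
      funext hkey
    rw [IntegrableOn, Measure.restrict_univ, this]
    exact (ProbabilityTheory.integrable_gaussianPDFReal (μ - s) v).const_mul _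
  · rw [himg, integral_image_eq_integral_abs_deriv_smul MeasurableSet.univ hderiv hinj,
      Measure.restrict_univ]
    simp_rw [hkey]
    rw [integral_const_mul, ProbabilityTheory.integral_gaussianPDFReal_eq_one _ hvne, mul_one]

lemma exists_bcf_LNv (M σl σu y : ℝ) (hσl : 0 < σl) (hy : 0 < y) :
    ∃ f : (ℝ × ℝ) →ᵇ ℝ, ∀ p ∈ Set.Icc (-M) M ×ˢ Set.Icc (σl ^ 2) (σu ^ 2),
      f p = LNv p.1 p.2 y := by
  set c1 : ℝ × ℝ → ℝ := fun p => max (-M) (min M p.1) with hc1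
  set c2 : ℝ × ℝ → ℝ := fun p => max (σl ^ 2) (min (σu ^ 2) p.2) with hc2
  have hc2pos : ∀ p, 0 < c2 p := fun p => lt_of_lt_of_le (by positivity) (le_max_left _ _)
  have hc1cont : Continuous c1 := continuous_const.max (continuous_const.min continuous_fst)
  have hc2cont : Continuous c2 := continuous_const.max (continuous_const.min continuous_snd)
  have hcont : Continuous fun p : ℝ × ℝ => LNv (c1 p) (c2 p) y := by
    unfold LNv
    apply Continuous.mul
    · apply Continuous.inv₀
      · exact (continuous_const.mul (Real.continuous_sqrt.comp hc2cont)).mul continuous_const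
      · intro p
        have h2 := hc2pos p
        have h3 : 0 < Real.sqrt (c2 p) := Real.sqrt_pos.mpr h2
        positivity
    · apply Real.continuous_exp.comp
      apply Continuous.div
      · exact ((continuous_const.sub hc1cont).pow 2).neg
      · exact continuous_const.mul hc2cont
      · intro p
        have h2 := hc2pos p
        positivity
  refine ⟨BoundedContinuousFunction.ofNormedAddCommGroup _ hcont
      ((y * σl * Real.sqrt (2 * Real.pi))⁻¹) ?_, ?_⟩
  · intro p
    rw [Real.norm_eq_abs, abs_of_nonneg (LNv_nonneg _ _ _ hy.le)]
    exact LNv_le _ _ _ _ hy hσl (le_max_left _ _)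
  · intro p hp
    simp only [Set.mem_prod, Set.mem_Icc] at hp
    show LNv (c1 p) (c2 p) y = LNv p.1 p.2 y
    have e1 : c1 p = p.1 := by
      simp only [hc1]
      rw [min_eq_right hp.1.2, max_eq_right hp.1.1]
    have e2 : c2 p = p.2 := by
      simp only [hc2]
      rw [min_eq_right hp.2.2, max_eq_right hp.2.1]
    rw [e1, e2]

lemma exists_bcf_h (M σl σu : ℝ) :
    ∃ f : (ℝ × ℝ) →ᵇ ℝ, ∀ p ∈ Set.Icc (-M) M ×ˢ Set.Icc (σl ^ 2) (σu ^ 2),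
      f p = Real.exp (p.2 / 2 - p.1) := by
  have hcont : Continuous fun p : ℝ × ℝ => Real.exp (min (σu ^ 2) p.2 / 2 - max (-M) p.1) :=
    Real.continuous_exp.comp (((continuous_const.min continuous_snd).div_const 2).sub
      (continuous_const.max continuous_fst))
  refine ⟨BoundedContinuousFunction.ofNormedAddCommGroup _ hcont
      (Real.exp (σu ^ 2 / 2 + M)) ?_, ?_⟩
  · intro p
    rw [Real.norm_eq_abs, abs_of_pos (Real.exp_pos _)]
    apply Real.exp_le_exp.mpr
    have h1 : min (σu ^ 2) p.2 ≤ σu ^ 2 := min_le_left _ _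
    have h2 : -M ≤ max (-M) p.1 := le_max_left _ _
    linarith
  · intro p hp
    simp only [Set.mem_prod, Set.mem_Icc] at hp
    show Real.exp (min (σu ^ 2) p.2 / 2 - max (-M) p.1) = _
    rw [min_eq_right hp.2.2, max_eq_right hp.1.1]

lemma measurable_lnv_aux :
    Measurable (Function.uncurry fun (y : ℝ) (p : ℝ × ℝ) =>
      ENNReal.ofReal (y⁻¹ * LNv p.1 p.2 y)) := by
  unfold LNv Function.uncurry
  have hy : Measurable fun a : ℝ × (ℝ × ℝ) => a.1 := measurable_fst
  have hmu : Measurable fun a : ℝ × (ℝ × ℝ) => a.2.1 := measurable_snd.fst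
  have hs : Measurable fun a : ℝ × (ℝ × ℝ) => a.2.2 := measurable_snd.snd
  exact ((hy.inv.mul ((((hy.mul (Real.continuous_sqrt.measurable.comp hs)).mul measurable_const).inv).mul
    (Real.measurable_exp.comp ((((Real.measurable_log.comp hy).sub hmu).pow_const 2).neg.div
      (measurable_const.mul hs)))))).ennreal_ofReal

lemma measurable_lnv_p (y : ℝ) : Measurable fun p : ℝ × ℝ => LNv p.1 p.2 y := by
  unfold LNv
  have hmu : Measurable fun p : ℝ × ℝ => p.1 := measurable_fst
  have hs : Measurable fun p : ℝ × ℝ => p.2 := measurable_snd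
  exact ((measurable_const.mul (Real.continuous_sqrt.measurable.comp hs)).mul measurable_const).inv.mul
    (Real.measurable_exp.comp (((measurable_const.sub hmu).pow_const 2).neg.div
      (measurable_const.mul hs)))

lemma cP_spec (M σl σu : ℝ) (hσl : 0 < σl)
    (ν : Measure (ℝ × ℝ)) [IsProbabilityMeasure ν]
    (hae : ∀ᵐ p ∂ν, p ∈ Set.Icc (-M) M ×ˢ Set.Icc (σl ^ 2) (σu ^ 2)) :
    cP ν = ∫ p, Real.exp (p.2 / 2 - p.1) ∂ν ∧
      IntegrableOn (fun y => y⁻¹ * mixG ν y) (Set.Ioi 0) ∧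
      0 < cP ν := by
  set h : ℝ × ℝ → ℝ := fun p => Real.exp (p.2 / 2 - p.1) with hh
  set G : ℝ → ℝ≥0∞ := fun y => ∫⁻ p, ENNReal.ofReal (y⁻¹ * LNv p.1 p.2 y) ∂ν with hG
  have hGmeas : Measurable G := measurable_lnv_aux.lintegral_prod_right'
  have hhcont : Continuous h := Real.continuous_exp.comp
    ((continuous_snd.div_const 2).sub continuous_fst)
  have hint_h : Integrable h ν := by
    refine Integrable.mono' (integrable_const (Real.exp (σu ^ 2 / 2 + M)))
      hhcont.aestronglyMeasurable ?_
    filter_upwards [hae] with p hp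
    simp only [Set.mem_prod, Set.mem_Icc] at hp
    rw [Real.norm_eq_abs, abs_of_pos (Real.exp_pos _)]
    apply Real.exp_le_exp.mpr
    have := hp.1.1
    have := hp.2.2
    linarith
  have hswap : ∫⁻ y in Set.Ioi (0 : ℝ), G y = ENNReal.ofReal (∫ p, h p ∂ν) := by
    rw [hG]
    rw [lintegral_lintegral_swap measurable_lnv_aux.aemeasurable]
    have hinner : ∀ᵐ p ∂ν,
        (∫⁻ y in Set.Ioi (0 : ℝ), ENNReal.ofReal (y⁻¹ * LNv p.1 p.2 y))
          = ENNReal.ofReal (h p) := by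
      filter_upwards [hae] with p hp
      simp only [Set.mem_prod, Set.mem_Icc] at hp
      have hs : 0 < p.2 := lt_of_lt_of_le (by positivity) hp.2.1
      obtain ⟨hI, hval⟩ := lnv_integral p.1 p.2 hs
      rw [← ofReal_integral_eq_lintegral_ofReal hI ?_, hval]
      exact (ae_restrict_iff' measurableSet_Ioi).mpr (ae_of_all _ fun y hy =>
        mul_nonneg (inv_nonneg.mpr (le_of_lt hy)) (LNv_nonneg _ _ _ (le_of_lt hy)))
    rw [lintegral_congr_ae hinner,
      ← ofReal_integral_eq_lintegral_ofReal hint_h (ae_of_all _ fun p => (Real.exp_pos _).le)]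
  have hfin : ∫⁻ y in Set.Ioi (0 : ℝ), G y ≠ ⊤ := by
    rw [hswap]; exact ENNReal.ofReal_ne_top
  have haefin : ∀ᵐ y ∂(volume.restrict (Set.Ioi (0 : ℝ))), G y < ⊤ := ae_lt_top hGmeas hfin
  have hptwise : ∀ y ∈ Set.Ioi (0 : ℝ), y⁻¹ * mixG ν y = (G y).toReal := by
    intro y hy
    have hy0 : (0 : ℝ) < y := hy
    rw [mixG, integral_eq_lintegral_of_nonneg_ae
      (ae_of_all _ fun p => LNv_nonneg _ _ _ hy0.le)
      (measurable_lnv_p y).aestronglyMeasurable, hG]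
    have hof : ∀ p : ℝ × ℝ, ENNReal.ofReal (y⁻¹ * LNv p.1 p.2 y)
        = ENNReal.ofReal y⁻¹ * ENNReal.ofReal (LNv p.1 p.2 y) :=
      fun p => ENNReal.ofReal_mul (inv_nonneg.mpr hy0.le)
    simp only [hof]
    rw [lintegral_const_mul _ ((measurable_lnv_p y).ennreal_ofReal),
      ENNReal.toReal_mul, ENNReal.toReal_ofReal (inv_nonneg.mpr hy0.le)]
  have hcongr : (fun y => y⁻¹ * mixG ν y)
      =ᵐ[volume.restrict (Set.Ioi (0 : ℝ))] fun y => (G y).toReal :=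
    (ae_restrict_iff' measurableSet_Ioi).mpr (ae_of_all _ hptwise)
  have hint2 : IntegrableOn (fun y => y⁻¹ * mixG ν y) (Set.Ioi 0) := by
    refine Integrable.congr ?_ hcongr.symm
    exact integrable_toReal_of_lintegral_ne_top hGmeas.aemeasurable hfin
  have hcPeq : cP ν = ∫ p, h p ∂ν := by
    rw [cP, integral_congr_ae hcongr, integral_toReal hGmeas.aemeasurable haefin, hswap,
      ENNReal.toReal_ofReal (integral_nonneg fun p => (Real.exp_pos _).le)]
  refine ⟨hcPeq, hint2, ?_⟩
  rw [hcPeq]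
  have hlow : Real.exp (σl ^ 2 / 2 - M) ≤ ∫ p, h p ∂ν := by
    have : ∫ (_ : ℝ × ℝ), Real.exp (σl ^ 2 / 2 - M) ∂ν = Real.exp (σl ^ 2 / 2 - M) := by
      simp [measure_univ]
    rw [← this]
    refine integral_mono_ae (integrable_const _) hint_h ?_
    filter_upwards [hae] with p hp
    simp only [Set.mem_prod, Set.mem_Icc] at hp
    apply Real.exp_le_exp.mpr
    have := hp.1.2
    have := hp.2.1
    linarith
  linarith [Real.exp_pos (σl ^ 2 / 2 - M)]

lemma ae_mem_of_coeFn_eq_one (Q : ProbabilityMeasure (ℝ × ℝ)) {K : Set (ℝ × ℝ)}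
    (hKm : MeasurableSet K) (h : Q K = 1) :
    ∀ᵐ p ∂(Q : Measure (ℝ × ℝ)), p ∈ K := by
  have h1 : (Q : Measure (ℝ × ℝ)) K = 1 := by
    rw [← ProbabilityMeasure.ennreal_coeFn_eq_coeFn_toMeasure, h]
    simp
  have h2 : (Q : Measure (ℝ × ℝ)) Kᶜ = 0 := (prob_compl_eq_zero_iff hKm).mpr h1
  exact mem_ae_iff.mpr h2

lemma tendsto_integral_of_bcf_on {K : Set (ℝ × ℝ)} {g : ℝ × ℝ → ℝ}
    (hbcf : ∃ f : (ℝ × ℝ) →ᵇ ℝ, ∀ p ∈ K, f p = g p)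
    (P₀ : ProbabilityMeasure (ℝ × ℝ)) (P : ℕ → ProbabilityMeasure (ℝ × ℝ))
    (hae₀ : ∀ᵐ p ∂(P₀ : Measure (ℝ × ℝ)), p ∈ K)
    (haen : ∀ n, ∀ᵐ p ∂(P n : Measure (ℝ × ℝ)), p ∈ K)
    (hconv : Tendsto P atTop (𝓝 P₀)) :
    Tendsto (fun n => ∫ p, g p ∂(P n : Measure (ℝ × ℝ))) atTop
      (𝓝 (∫ p, g p ∂(P₀ : Measure (ℝ × ℝ)))) := by
  obtain ⟨f, hf⟩ := hbcf
  have h0 : ∫ p, g p ∂(P₀ : Measure (ℝ × ℝ)) = ∫ p, f p ∂(P₀ : Measure (ℝ × ℝ)) :=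
    integral_congr_ae (by filter_upwards [hae₀] with p hp; exact (hf p hp).symm)
  have hn : ∀ n, ∫ p, g p ∂(P n : Measure (ℝ × ℝ)) = ∫ p, f p ∂(P n : Measure (ℝ × ℝ)) :=
    fun n => integral_congr_ae (by filter_upwards [haen n] with p hp; exact (hf p hp).symm)
  rw [h0]
  simp only [hn]
  exact ProbabilityMeasure.tendsto_iff_forall_integral_tendsto.mp hconv f

/-- If `Pₙ → P₀` weakly, all supported on `K = [-M, M] × [σ̲², σ̄²]`, then the debiased
densities `f_{Pₙ}` converge to `f_{P₀}` in `L¹(0, ∞)`. -/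
theorem debiased_L1_consistency (M σl σu : ℝ) (hM : 0 < M) (hσl : 0 < σl) (hσ : σl ≤ σu)
    (K : Set (ℝ × ℝ)) (hK : K = Set.Icc (-M) M ×ˢ Set.Icc (σl ^ 2) (σu ^ 2))
    (P₀ : ProbabilityMeasure (ℝ × ℝ)) (P : ℕ → ProbabilityMeasure (ℝ × ℝ))
    (hP₀ : P₀ K = 1) (hPn : ∀ n, P n K = 1)
    (hconv : Tendsto P atTop (𝓝 P₀)) :
    Tendsto
      (fun n => ∫ y in Set.Ioi (0 : ℝ),
        |fP (P n : Measure (ℝ × ℝ)) y - fP (P₀ : Measure (ℝ × ℝ)) y|)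
      atTop (𝓝 0) := by
  have hKm : MeasurableSet K := by
    rw [hK]; exact (measurableSet_Icc.prod measurableSet_Icc)
  have hae₀ : ∀ᵐ p ∂(P₀ : Measure (ℝ × ℝ)), p ∈ K := ae_mem_of_coeFn_eq_one P₀ hKm hP₀
  have haen : ∀ n, ∀ᵐ p ∂(P n : Measure (ℝ × ℝ)), p ∈ K :=
    fun n => ae_mem_of_coeFn_eq_one (P n) hKm (hPn n)
  subst hK
  obtain ⟨hc₀eq, hint₀, hc₀pos⟩ := cP_spec M σl σu hσl (P₀ : Measure (ℝ × ℝ)) hae₀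
  have hspecn := fun n => cP_spec M σl σu hσl (P n : Measure (ℝ × ℝ)) (haen n)
  -- convergence of cP
  have hcP : Tendsto (fun n => cP (P n : Measure (ℝ × ℝ))) atTop
      (𝓝 (cP (P₀ : Measure (ℝ × ℝ)))) := by
    have := tendsto_integral_of_bcf_on (exists_bcf_h M σl σu) P₀ P hae₀ haen hconv
    rw [← hc₀eq] at this
    apply this.congr
    intro n
    exact ((hspecn n).1).symm
  -- pointwise convergence of mixG
  have hmix : ∀ y : ℝ, 0 < y →
      Tendsto (fun n => mixG (P n : Measure (ℝ × ℝ)) y) atTop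
        (𝓝 (mixG (P₀ : Measure (ℝ × ℝ)) y)) := by
    intro y hy
    exact tendsto_integral_of_bcf_on (exists_bcf_LNv M σl σu y hσl hy) P₀ P hae₀ haen hconv
  -- pointwise convergence of fP
  have hfPt : ∀ y : ℝ, 0 < y →
      Tendsto (fun n => fP (P n : Measure (ℝ × ℝ)) y) atTop
        (𝓝 (fP (P₀ : Measure (ℝ × ℝ)) y)) := by
    intro y hy
    unfold fP
    exact (hcP.inv₀ hc₀pos.ne').mul (((hmix y hy).const_mul y⁻¹))
  -- integrability and basic facts
  set μm : Measure ℝ := volume.restrict (Set.Ioi (0 : ℝ)) with hμm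
  set f : ℝ → ℝ := fP (P₀ : Measure (ℝ × ℝ)) with hf
  set fn : ℕ → ℝ → ℝ := fun n => fP (P n : Measure (ℝ × ℝ)) with hfn
  have hf_int : Integrable f μm := by
    have := hint₀.const_mul (cP (P₀ : Measure (ℝ × ℝ)))⁻¹
    exact this
  have hfn_int : ∀ n, Integrable (fn n) μm := by
    intro n
    exact ((hspecn n).2.1).const_mul _
  have hf_nonneg : ∀ y : ℝ, 0 < y → 0 ≤ f y := by
    intro y hy
    exact mul_nonneg (inv_nonneg.mpr hc₀pos.le)
      (mul_nonneg (inv_nonneg.mpr hy.le)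
        (integral_nonneg fun p => LNv_nonneg _ _ _ hy.le))
  have hfn_nonneg : ∀ n, ∀ y : ℝ, 0 < y → 0 ≤ fn n y := by
    intro n y hy
    exact mul_nonneg (inv_nonneg.mpr (hspecn n).2.2.le)
      (mul_nonneg (inv_nonneg.mpr hy.le)
        (integral_nonneg fun p => LNv_nonneg _ _ _ hy.le))
  have hint_one : ∀ (ν : Measure (ℝ × ℝ)), 0 < cP ν →
      IntegrableOn (fun y => y⁻¹ * mixG ν y) (Set.Ioi 0) →
      ∫ y in Set.Ioi (0 : ℝ), fP ν y = 1 := by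
    intro ν hc hint
    unfold fP
    rw [integral_const_mul, ← cP, inv_mul_cancel₀ hc.ne']
  have hf_one : ∫ y in Set.Ioi (0 : ℝ), f y = 1 := hint_one _ hc₀pos hint₀
  have hfn_one : ∀ n, ∫ y in Set.Ioi (0 : ℝ), fn n y = 1 :=
    fun n => hint_one _ (hspecn n).2.2 (hspecn n).2.1
  -- Scheffé argument
  have key : ∀ n, ∫ y in Set.Ioi (0 : ℝ), |fn n y - f y|
      = 2 * ∫ y in Set.Ioi (0 : ℝ), max (f y - fn n y) 0 := by
    intro n
    have hid : ∀ y : ℝ, |fn n y - f y| = (fn n y - f y) + 2 * max (f y - fn n y) 0 := by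
      intro y
      rcases le_total (f y) (fn n y) with h | h
      · rw [abs_of_nonneg (by linarith), max_eq_right (by linarith)]; ring
      · rw [abs_of_nonpos (by linarith), max_eq_left (by linarith)]; ring
    have hsub : Integrable (fun y => fn n y - f y) μm := (hfn_int n).sub hf_int
    have hpos : Integrable (fun y => max (f y - fn n y) 0) μm :=
      (hf_int.sub (hfn_int n)).pos_part
    calc ∫ y in Set.Ioi (0 : ℝ), |fn n y - f y|
        = ∫ y in Set.Ioi (0 : ℝ), ((fn n y - f y) + 2 * max (f y - fn n y) 0) := by
          exact integral_congr_ae (ae_of_all _ hid)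
      _ = (∫ y in Set.Ioi (0 : ℝ), (fn n y - f y))
          + ∫ y in Set.Ioi (0 : ℝ), 2 * max (f y - fn n y) 0 :=
          integral_add hsub (hpos.const_mul 2)
      _ = ((∫ y in Set.Ioi (0 : ℝ), fn n y) - ∫ y in Set.Ioi (0 : ℝ), f y)
          + 2 * ∫ y in Set.Ioi (0 : ℝ), max (f y - fn n y) 0 := by
          rw [integral_sub (hfn_int n) hf_int, integral_const_mul]
      _ = 2 * ∫ y in Set.Ioi (0 : ℝ), max (f y - fn n y) 0 := by
          rw [hfn_one n, hf_one]; ring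
  have hdct : Tendsto (fun n => ∫ y in Set.Ioi (0 : ℝ), max (f y - fn n y) 0) atTop (𝓝 0) := by
    have hdd : Tendsto (fun n => ∫ y in Set.Ioi (0 : ℝ), max (f y - fn n y) 0) atTop
        (𝓝 (∫ (_ : ℝ) in Set.Ioi (0 : ℝ), (0 : ℝ))) := by
      apply tendsto_integral_of_dominated_convergence f
      · intro n
        exact ((hf_int.sub (hfn_int n)).pos_part).aestronglyMeasurable
      · exact hf_int
      · intro n
        refine (ae_restrict_iff' measurableSet_Ioi).mpr (ae_of_all _ fun y hy => ?_)
        have h1 := hf_nonneg y hy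
        have h2 := hfn_nonneg n y hy
        rw [Real.norm_eq_abs, abs_of_nonneg (le_max_right _ _)]
        exact max_le (by linarith) h1
      · refine (ae_restrict_iff' measurableSet_Ioi).mpr (ae_of_all _ fun y hy => ?_)
        have : Tendsto (fun n => max (f y - fn n y) 0) atTop (𝓝 (max (f y - f y) 0)) :=
          (tendsto_const_nhds.sub (hfPt y hy)).max tendsto_const_nhds
        simpa using this
    simpa using hdd
  have : Tendsto (fun n => 2 * ∫ y in Set.Ioi (0 : ℝ), max (f y - fn n y) 0) atTop (𝓝 (2 * 0)) :=
    hdct.const_mul 2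
  rw [mul_zero] at this
  apply this.congr
  intro n
  exact (key n).symm
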